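/- Let n ≥ 1, let B be the closed Euclidean unit ball in R^n, and let x₀ ∈ R^n be a unit vector. There exist positive constants c, C such that for every ε ∈ (0,1): c ε ≤ vol( B Δ (ε x₀ + B) ) ≤ C ε, where ε x₀ + B is the translate of B by ε x₀, Δ denotes the symmetric difference, and vol is n-dimensional Lebesgue measure. -/

import Mathlib

open MeasureTheory Pointwise Metric

private lemma pow_upper (n : ℕ) {ε : ℝ} (h0 : 0 ≤ ε) (h1 : ε ≤ 1) :
    (1 + ε) ^ n ≤ 1 + (2 ^ n - 1) * ε := by
  induction n with
  | zero => simp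
  | succ k ih =>
    have h2 : (1:ℝ) ≤ 2 ^ k := one_le_pow₀ (by norm_num)
    calc (1 + ε) ^ (k+1) = (1 + ε) ^ k * (1 + ε) := by ring
    _ ≤ (1 + (2 ^ k - 1) * ε) * (1 + ε) := by
        apply mul_le_mul_of_nonneg_right ih (by linarith)
    _ ≤ 1 + (2 ^ (k+1) - 1) * ε := by
        have hε2 : ε ^ 2 ≤ ε := by nlinarith
        have h3 : ((2:ℝ) ^ k - 1) * ε ^ 2 ≤ (2 ^ k - 1) * ε :=
          mul_le_mul_of_nonneg_left hε2 (by linarith)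
        rw [pow_succ]
        nlinarith

set_option maxHeartbeats 1000000 in
theorem stmt_14 (n : ℕ) (hn : 1 ≤ n) (x₀ : EuclideanSpace ℝ (Fin n)) (hx₀ : ‖x₀‖ = 1) :
    ∃ c C : ℝ, 0 < c ∧ 0 < C ∧
      ∀ ε : ℝ, 0 < ε → ε < 1 →
        c * ε ≤ (volume (symmDiff (Metric.closedBall (0 : EuclideanSpace ℝ (Fin n)) 1)
            ((ε • x₀) +ᵥ Metric.closedBall (0 : EuclideanSpace ℝ (Fin n)) 1))).toReal ∧
          (volume (symmDiff (Metric.closedBall (0 : EuclideanSpace ℝ (Fin n)) 1)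
            ((ε • x₀) +ᵥ Metric.closedBall (0 : EuclideanSpace ℝ (Fin n)) 1))).toReal ≤ C * ε := by
  have hx0ne : x₀ ≠ 0 := by intro h; rw [h, norm_zero] at hx₀; norm_num at hx₀
  haveI : Nontrivial (EuclideanSpace ℝ (Fin n)) := ⟨⟨x₀, 0, hx0ne⟩⟩
  have hfr : Module.finrank ℝ (EuclideanSpace ℝ (Fin n)) = n := finrank_euclideanSpace_fin
  set B : Set (EuclideanSpace ℝ (Fin n)) := Metric.closedBall 0 1 with hBdef
  set D : Set (EuclideanSpace ℝ (Fin n)) :=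
    B ∩ {x | (inner ℝ x x₀ : ℝ) ≤ -(1/2)} with hDdef
  -- D contains a small ball
  have hDball : Metric.closedBall ((-(3/4) : ℝ) • x₀) (1/8) ⊆ D := by
    intro x hx
    rw [mem_closedBall, dist_eq_norm] at hx
    have hnx : ‖x - (-(3/4) : ℝ) • x₀‖ ≤ 1/8 := hx
    constructor
    · rw [hBdef, mem_closedBall, dist_zero_right]
      have hxr : (x - (-(3/4) : ℝ) • x₀) + (-(3/4) : ℝ) • x₀ = x := by abel
      calc ‖x‖ = ‖(x - (-(3/4) : ℝ) • x₀) + (-(3/4) : ℝ) • x₀‖ := by rw [hxr]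
      _ ≤ ‖x - (-(3/4) : ℝ) • x₀‖ + ‖(-(3/4) : ℝ) • x₀‖ := norm_add_le _ _
      _ ≤ 1/8 + 3/4 := by
          refine add_le_add hnx ?_
          rw [norm_smul, hx₀]; norm_num
      _ ≤ 1 := by norm_num
    · have hcs := real_inner_le_norm (x - (-(3/4) : ℝ) • x₀) x₀
      have : (inner ℝ (x - (-(3/4) : ℝ) • x₀) x₀ : ℝ)
          = (inner ℝ x x₀ : ℝ) + (3/4) * ‖x₀‖ ^ 2 := by
        rw [inner_sub_left, real_inner_smul_left, real_inner_self_eq_norm_sq]; ring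
      rw [hx₀] at hcs this
      simp only [Set.mem_setOf_eq]
      nlinarith
  have hDmeas : volume D < ⊤ :=
    lt_of_le_of_lt (measure_mono Set.inter_subset_left) measure_closedBall_lt_top
  have hDpos : 0 < volume D := by
    refine lt_of_lt_of_le ?_ (measure_mono (Set.Subset.trans ball_subset_closedBall hDball))
    exact measure_ball_pos _ _ (by norm_num)
  set VD : ℝ := (volume D).toReal with hVDdef
  have hVDpos : 0 < VD := ENNReal.toReal_pos hDpos.ne' hDmeas.ne
  set V : ℝ := (volume (Metric.ball (0 : EuclideanSpace ℝ (Fin n)) 1)).toReal with hVdef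
  have hVpos : 0 < V :=
    ENNReal.toReal_pos (measure_ball_pos _ _ one_pos).ne' measure_ball_lt_top.ne
  refine ⟨VD / 4, (2 ^ n + n) * V, by positivity, by positivity, ?_⟩
  intro ε hε0 hε1
  set v : EuclideanSpace ℝ (Fin n) := ε • x₀ with hvdef
  have hnv : ‖v‖ = ε := by rw [hvdef, norm_smul, hx₀, Real.norm_eq_abs, abs_of_pos hε0, mul_one]
  set S : Set (EuclideanSpace ℝ (Fin n)) := symmDiff B (v +ᵥ B) with hSdef
  -- membership characterization of v +ᵥ B
  have hmemvB : ∀ x : EuclideanSpace ℝ (Fin n), x ∈ v +ᵥ B ↔ ‖x - v‖ ≤ 1 := by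
    intro x
    rw [Set.mem_vadd_set]
    constructor
    · rintro ⟨y, hy, rfl⟩
      rw [hBdef, mem_closedBall, dist_zero_right] at hy
      simpa using hy
    · intro h
      exact ⟨x - v, by rw [hBdef, mem_closedBall, dist_zero_right]; exact h,
        by rw [vadd_eq_add]; abel⟩
  -- finiteness of the symmetric difference
  have hSsub2 : S ⊆ Metric.closedBall 0 2 := by
    intro x hx
    rw [hSdef, Set.mem_symmDiff] at hx
    rw [mem_closedBall, dist_zero_right]
    rcases hx with ⟨hx, -⟩ | ⟨hx, -⟩
    · rw [hBdef, mem_closedBall, dist_zero_right] at hx; linarith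
    · rw [hmemvB] at hx
      have hxr : (x - v) + v = x := by abel
      calc ‖x‖ = ‖(x - v) + v‖ := by rw [hxr]
      _ ≤ ‖x - v‖ + ‖v‖ := norm_add_le _ _
      _ ≤ 2 := by rw [hnv]; linarith
  have hSfin : volume S < ⊤ :=
    lt_of_le_of_lt (measure_mono hSsub2) measure_closedBall_lt_top
  constructor
  · -- LOWER BOUND
    set t : ℝ := 1 - ε / 4 with htdef
    have ht0 : 0 < t := by rw [htdef]; linarith
    have ht1 : t ≤ 1 := by rw [htdef]; linarith
    -- D \ t • D ⊆ S
    have hkey : D \ t • D ⊆ S := by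
      rintro x ⟨hxD, hxnot⟩
      obtain ⟨hxB, hxinner⟩ := hxD
      have hxinner' : (inner ℝ x x₀ : ℝ) ≤ -(1/2) := hxinner
      have hxn : ‖x‖ ≤ 1 := by rwa [hBdef, mem_closedBall, dist_zero_right] at hxB
      -- x ∉ t • D forces ‖x‖ > t
      have hxt : t < ‖x‖ := by
        by_contra hle
        push_neg at hle
        apply hxnot
        rw [Set.mem_smul_set_iff_inv_smul_mem₀ ht0.ne']
        constructor
        · rw [hBdef, mem_closedBall, dist_zero_right, norm_smul, norm_inv,
            Real.norm_eq_abs, abs_of_pos ht0]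
          calc t⁻¹ * ‖x‖ ≤ t⁻¹ * t := by
                exact mul_le_mul_of_nonneg_left hle (by positivity)
          _ = 1 := inv_mul_cancel₀ ht0.ne'
        · have h1t : 1 ≤ t⁻¹ := (one_le_inv_iff₀.mpr ⟨ht0, ht1⟩ : _)
          simp only [Set.mem_setOf_eq, real_inner_smul_left]
          nlinarith
      -- then x ∉ v +ᵥ B
      have hxnotvB : x ∉ v +ᵥ B := by
        rw [hmemvB]
        intro hc
        have hsq : ‖x - v‖ ^ 2 = ‖x‖ ^ 2 - 2 * (ε * (inner ℝ x x₀ : ℝ)) + ε ^ 2 := by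
          rw [norm_sub_sq_real, hvdef, real_inner_smul_right, norm_smul, hx₀,
            Real.norm_eq_abs, abs_of_pos hε0]
          ring
        have h1 : ‖x - v‖ ^ 2 ≤ 1 := by nlinarith [norm_nonneg (x - v)]
        have ht2 : t ^ 2 < ‖x‖ ^ 2 := by nlinarith [norm_nonneg x]
        rw [htdef] at ht2
        nlinarith
      rw [hSdef, Set.mem_symmDiff]
      exact Or.inl ⟨hxB, hxnotvB⟩
    -- volume of t • D
    have htD : (volume (t • D)).toReal = t ^ n * VD := by
      rw [Measure.addHaar_smul, hfr, ENNReal.toReal_mul, ENNReal.toReal_ofReal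
        (abs_nonneg _), abs_of_pos (pow_pos ht0 n)]
    have htDfin : volume (t • D) < ⊤ := by
      rw [Measure.addHaar_smul]; exact ENNReal.mul_lt_top ENNReal.ofReal_lt_top hDmeas
    -- VD ≤ vol(D \ tD) + vol(tD)
    have hsplit : volume D ≤ volume (D \ t • D) + volume (t • D) := by
      calc volume D ≤ volume ((D \ t • D) ∪ t • D) :=
            measure_mono (by intro x hx; by_cases h : x ∈ t • D
                             · exact Or.inr h
                             · exact Or.inl ⟨hx, h⟩)
      _ ≤ _ := measure_union_le _ _
    have hdifffin : volume (D \ t • D) < ⊤ :=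
      lt_of_le_of_lt (measure_mono Set.diff_subset) hDmeas
    have hsplit' : VD ≤ (volume (D \ t • D)).toReal + (volume (t • D)).toReal := by
      rw [hVDdef, ← ENNReal.toReal_add hdifffin.ne htDfin.ne]
      exact ENNReal.toReal_mono (ENNReal.add_lt_top.mpr ⟨hdifffin, htDfin⟩).ne hsplit
    have hmono : (volume (D \ t • D)).toReal ≤ (volume S).toReal :=
      ENNReal.toReal_mono hSfin.ne (measure_mono hkey)
    have htn : t ^ n ≤ t := by
      calc t ^ n ≤ t ^ 1 := pow_le_pow_of_le_one ht0.le ht1 hn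
      _ = t := pow_one t
    have : VD / 4 * ε ≤ VD - t ^ n * VD := by
      have : VD * (1 - t) ≤ VD * (1 - t ^ n) := by nlinarith
      rw [htdef] at this; nlinarith
    rw [htD] at hsplit'
    linarith
  · -- UPPER BOUND
    have hSsub : S ⊆ Metric.closedBall 0 (1 + ε) \ Metric.ball 0 (1 - ε) := by
      intro x hx
      rw [hSdef, Set.mem_symmDiff] at hx
      rcases hx with ⟨hx1, hx2⟩ | ⟨hx1, hx2⟩
      · rw [hBdef, mem_closedBall, dist_zero_right] at hx1
        rw [hmemvB] at hx2
        push_neg at hx2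
        constructor
        · rw [mem_closedBall, dist_zero_right]; linarith
        · rw [mem_ball, dist_zero_right]
          push_neg
          by_contra h
          push_neg at h
          have : ‖x - v‖ ≤ ‖x‖ + ‖v‖ := norm_sub_le _ _
          rw [hnv] at this
          linarith
      · rw [hmemvB] at hx1
        rw [hBdef, mem_closedBall, dist_zero_right] at hx2
        push_neg at hx2
        constructor
        · rw [mem_closedBall, dist_zero_right]
          have hxr : (x - v) + v = x := by abel
          calc ‖x‖ = ‖(x - v) + v‖ := by rw [hxr]
          _ ≤ ‖x - v‖ + ‖v‖ := norm_add_le _ _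
          _ ≤ 1 + ε := by rw [hnv]; linarith
        · rw [mem_ball, dist_zero_right]; push_neg; linarith
    have hcb : (volume (Metric.closedBall (0 : EuclideanSpace ℝ (Fin n)) (1 + ε))).toReal
        = (1 + ε) ^ n * V := by
      rw [Measure.addHaar_closedBall _ _ (by linarith), hfr, ENNReal.toReal_mul,
        ENNReal.toReal_ofReal (by positivity)]
    have hb : (volume (Metric.ball (0 : EuclideanSpace ℝ (Fin n)) (1 - ε))).toReal
        = (1 - ε) ^ n * V := by
      rw [Measure.addHaar_ball _ _ (by linarith), hfr, ENNReal.toReal_mul,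
        ENNReal.toReal_ofReal (pow_nonneg (by linarith) n)]
    have hsub : Metric.ball (0 : EuclideanSpace ℝ (Fin n)) (1 - ε)
        ⊆ Metric.closedBall 0 (1 + ε) :=
      Set.Subset.trans ball_subset_closedBall (closedBall_subset_closedBall (by linarith))
    have hdiff : volume (Metric.closedBall (0 : EuclideanSpace ℝ (Fin n)) (1 + ε)
          \ Metric.ball 0 (1 - ε))
        = volume (Metric.closedBall (0 : EuclideanSpace ℝ (Fin n)) (1 + ε))
          - volume (Metric.ball (0 : EuclideanSpace ℝ (Fin n)) (1 - ε)) :=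
      measure_diff hsub measurableSet_ball.nullMeasurableSet measure_ball_lt_top.ne
    have hSle : (volume S).toReal ≤ (1 + ε) ^ n * V - (1 - ε) ^ n * V := by
      have h1 : (volume S).toReal ≤ (volume (Metric.closedBall
          (0 : EuclideanSpace ℝ (Fin n)) (1 + ε) \ Metric.ball 0 (1 - ε))).toReal :=
        ENNReal.toReal_mono
          (by rw [hdiff]; exact (tsub_le_self.trans_lt measure_closedBall_lt_top).ne)
          (measure_mono hSsub)
      rw [hdiff, ENNReal.toReal_sub_of_le (measure_mono hsub)
        measure_closedBall_lt_top.ne, hcb, hb] at h1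
      exact h1
    refine hSle.trans ?_
    have hup : (1 + ε) ^ n ≤ 1 + (2 ^ n - 1) * ε := pow_upper n hε0.le hε1.le
    have hlo : 1 - (n : ℝ) * ε ≤ (1 - ε) ^ n := by
      have := one_add_mul_le_pow (a := -ε) (by linarith) n
      simpa [sub_eq_add_neg] using this
    have hεn : (1 + ε) ^ n - (1 - ε) ^ n ≤ (2 ^ n + n) * ε := by nlinarith
    nlinarith
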